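/- Let U_R = {ζ : |ζ| > R, |Arg ζ − π| < π/8} and suppose μ(x, y) = x + r·log x + s·log y + x·β(y) + η(x, y) where r, s ∈ ℂ are constants, β is holomorphic with |β(y)| ≤ C/|y| on U_R, and η is holomorphic and bounded by M on U_R × U_R. Then for R sufficiently large (depending on r, C, M), the map x ↦ μ(x, y) is injective on U_R for each fixed y ∈ U_R. -/

import Mathlib

open Real

/-- `U_R = {ζ : |ζ| > R, |Arg(ζ) − π| < π/8}`. -/
def Usector (R : ℝ) : Set ℂ :=
  {ζ : ℂ | R < ‖ζ‖ ∧ |Complex.arg (-ζ)| < π / 8}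

/-- The branch of the logarithm adapted to the sector `U_R`. -/
noncomputable def sectorLog (ζ : ℂ) : ℂ := Complex.log (-ζ)

lemma usector_re (R : ℝ) (hR : 0 < R) {x : ℂ} (hx : x ∈ Usector R) :
    R * Real.cos (π / 8) < (-x).re := by
  obtain ⟨hn, ha⟩ := hx
  have hx0 : (-x) ≠ 0 := by
    intro h
    rw [show x = 0 by simpa using congrArg Neg.neg h] at hn
    simp at hn; linarith
  have hcos : Real.cos (π / 8) ≤ Real.cos (Complex.arg (-x)) := by
    rw [← Real.cos_abs (Complex.arg (-x))]
    apply Real.cos_le_cos_of_nonneg_of_le_pi (abs_nonneg _)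
    · have : (0:ℝ) < π := Real.pi_pos
      linarith
    · exact ha.le
  have hre : (-x).re = ‖-x‖ * Real.cos (Complex.arg (-x)) := by
    rw [Complex.cos_arg hx0, mul_comm, div_mul_cancel₀ _ (norm_ne_zero_iff.mpr hx0)]
  rw [hre]
  have hcospos : 0 < Real.cos (π / 8) := Real.cos_pos_of_mem_Ioo ⟨by
      have := Real.pi_pos; linarith, by have := Real.pi_pos; linarith⟩
  have hnabs : R < ‖-x‖ := by simpa using hn
  calc R * Real.cos (π / 8) < ‖-x‖ * Real.cos (π / 8) := by
        exact mul_lt_mul_of_pos_right hnabs hcospos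
    _ ≤ ‖-x‖ * Real.cos (Complex.arg (-x)) :=
        mul_le_mul_of_nonneg_left hcos (norm_nonneg _)

lemma log_lip (c : ℝ) (hc : 0 < c) {a b : ℂ} (ha : c < a.re) (hb : c < b.re) :
    ‖Complex.log a - Complex.log b‖ ≤ (1 / c) * ‖a - b‖ := by
  set S : Set ℂ := {z : ℂ | c < z.re} with hS
  have hconv : Convex ℝ S := convex_halfSpace_re_gt c
  have hderiv : ∀ z ∈ S, HasFDerivWithinAt Complex.log
      (ContinuousLinearMap.smulRight (1 : ℂ →L[ℂ] ℂ) z⁻¹) S z := by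
    intro z hz
    exact ((Complex.hasDerivAt_log (Or.inl (hc.trans hz))).hasFDerivAt).hasFDerivWithinAt
  have hbound : ∀ z ∈ S, ‖ContinuousLinearMap.smulRight (1 : ℂ →L[ℂ] ℂ) z⁻¹‖ ≤ 1 / c := by
    intro z hz
    rw [ContinuousLinearMap.norm_smulRight_apply, norm_one, one_mul, norm_inv, one_div]
    apply inv_anti₀ hc
    calc c ≤ z.re := (hz : c < z.re).le
      _ ≤ ‖z‖ := Complex.re_le_norm z
  exact hconv.norm_image_sub_le_of_norm_hasFDerivWithin_le hderiv hbound hb ha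

/-- Quantitative injectivity of the Abel–Fatou coordinate in the first variable:
if `μ(x,y) = x + r log x + s log y + xβ(y) + η(x,y)` with `|β(y)| ≤ C/|y|`,
the η-difference quotient bounded by `ε`, `η` bounded by `M`, and
`|r|/(R cos(π/8)) + C/R + ε < 1`, then `x ↦ μ(x,y)` is injective on `U_R`. -/
theorem abel_fatou_injective (R : ℝ) (hR : 0 < R) (r s : ℂ) (C M ε : ℝ)
    (β : ℂ → ℂ) (η : ℂ × ℂ → ℂ) (y : ℂ) (hy : y ∈ Usector R)
    (hβ : ‖β y‖ ≤ C / ‖y‖)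
    (hηM : ∀ p ∈ (Usector R) ×ˢ (Usector R), ‖η p‖ ≤ M)
    (hηdiff : ∀ x₁ ∈ Usector R, ∀ x₂ ∈ Usector R,
      ‖η (x₁, y) - η (x₂, y)‖ ≤ ε * ‖x₁ - x₂‖)
    (hsmall : ‖r‖ / (R * Real.cos (π / 8)) + C / R + ε < 1) :
    Set.InjOn (fun x : ℂ => x + r * sectorLog x + s * sectorLog y + x * β y + η (x, y))
      (Usector R) := by
  intro x₁ hx₁ x₂ hx₂ heq
  by_contra hne
  have hd : (0:ℝ) < ‖x₁ - x₂‖ := by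
    simpa [sub_eq_zero] using (norm_pos_iff.mpr (sub_ne_zero.mpr hne))
  set d := ‖x₁ - x₂‖ with hdd
  set c := R * Real.cos (π / 8) with hcc
  have hcospos : 0 < Real.cos (π / 8) := Real.cos_pos_of_mem_Ioo ⟨by
      have := Real.pi_pos; linarith, by have := Real.pi_pos; linarith⟩
  have hc : 0 < c := mul_pos hR hcospos
  -- log Lipschitz bound
  have hlog : ‖sectorLog x₁ - sectorLog x₂‖ ≤ (1 / c) * d := by
    have h := log_lip c hc (usector_re R hR hx₁) (usector_re R hR hx₂)
    have h2 : ‖(-x₁) - (-x₂)‖ = ‖x₁ - x₂‖ := by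
      rw [show (-x₁) - (-x₂) = -(x₁ - x₂) by ring, norm_neg]
    rw [h2] at h
    exact h
  -- β bound
  have hyR : R < ‖y‖ := hy.1
  have hC : 0 ≤ C := by
    by_contra h
    push_neg at h
    have : C / ‖y‖ < 0 := div_neg_of_neg_of_pos h (hR.trans hyR)
    have := (norm_nonneg (β y)).trans hβ
    linarith
  have hβ' : ‖β y‖ ≤ C / R := hβ.trans (div_le_div_of_nonneg_left hC hR hyR.le)
  -- η bound
  have hη : ‖η (x₁, y) - η (x₂, y)‖ ≤ ε * d := hηdiff x₁ hx₁ x₂ hx₂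
  -- the key identity
  simp only [] at heq
  have key : x₁ - x₂ = -(r * (sectorLog x₁ - sectorLog x₂) + (x₁ - x₂) * β y
      + (η (x₁, y) - η (x₂, y))) := by
    linear_combination heq
  have hnorm : d ≤ ‖r‖ * ((1/c) * d) + (C / R) * d + ε * d := by
    calc d = ‖x₁ - x₂‖ := rfl
      _ = ‖r * (sectorLog x₁ - sectorLog x₂) + (x₁ - x₂) * β y
          + (η (x₁, y) - η (x₂, y))‖ := by conv_lhs => rw [key, norm_neg]
      _ ≤ ‖r * (sectorLog x₁ - sectorLog x₂) + (x₁ - x₂) * β y‖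
          + ‖η (x₁, y) - η (x₂, y)‖ := norm_add_le _ _
      _ ≤ ‖r * (sectorLog x₁ - sectorLog x₂)‖ + ‖(x₁ - x₂) * β y‖
          + ‖η (x₁, y) - η (x₂, y)‖ := by gcongr; exact norm_add_le _ _
      _ ≤ ‖r‖ * ((1/c) * d) + d * (C / R) + ε * d := by
          gcongr
          · rw [norm_mul]; exact mul_le_mul_of_nonneg_left hlog (norm_nonneg r)
          · rw [norm_mul]; exact mul_le_mul_of_nonneg_left hβ' (norm_nonneg _)
      _ = ‖r‖ * ((1/c) * d) + (C / R) * d + ε * d := by ring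
  have hfinal : d < d := by
    have : ‖r‖ * ((1/c) * d) + (C / R) * d + ε * d = (‖r‖ / c + C / R + ε) * d := by ring
    rw [this] at hnorm
    calc d ≤ (‖r‖ / c + C / R + ε) * d := hnorm
      _ < 1 * d := by exact mul_lt_mul_of_pos_right hsmall hd
      _ = d := one_mul d
  exact absurd hfinal (lt_irrefl d)
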